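/- Let Λ > 0. For every ℓ with 0 < ℓ < 2·arsinh(1) and all s, s₀ ∈ [−X(ℓ), X(ℓ)] with |s − s₀| ≤ Λ, the conformal factor ρ_ℓ(s) = ℓ/(2π·cos(ℓ·s/(2π))) satisfies ρ_ℓ(s) ≤ e^{Λ/π}·ρ_ℓ(s₀). -/

import Mathlib

/-- Half-length of the hyperbolic collar around a geodesic of length `ℓ`. -/
noncomputable def collarX (ℓ : ℝ) : ℝ :=
  2 * Real.pi / ℓ * (Real.pi / 2 - Real.arctan (Real.sinh (ℓ / 2)))

/-- Conformal factor of the hyperbolic collar. -/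
noncomputable def collarRho (ℓ s : ℝ) : ℝ :=
  ℓ / (2 * Real.pi * Real.cos (ℓ * s / (2 * Real.pi)))

/-- The conformal factor varies by at most a factor `e^{Λ/π}` over distances `≤ Λ`. -/
theorem collarRho_comparable (Λ : ℝ) (hΛ : 0 < Λ) (ℓ : ℝ) (h0 : 0 < ℓ)
    (h1 : ℓ < 2 * Real.arsinh 1) (s s₀ : ℝ)
    (hs : s ∈ Set.Icc (-(collarX ℓ)) (collarX ℓ))
    (hs₀ : s₀ ∈ Set.Icc (-(collarX ℓ)) (collarX ℓ))
    (hd : |s - s₀| ≤ Λ) :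
    collarRho ℓ s ≤ Real.exp (Λ / Real.pi) * collarRho ℓ s₀ := by
  have hπ : (0:ℝ) < Real.pi := Real.pi_pos
  set c : ℝ := ℓ / (2 * Real.pi) with hc
  have hcpos : 0 < c := by positivity
  set A : ℝ := Real.pi / 2 - Real.arctan (Real.sinh (ℓ / 2)) with hA
  have hA0 : 0 < A := by
    have := Real.arctan_lt_pi_div_two (Real.sinh (ℓ / 2))
    simp only [hA]; linarith
  have hA2 : A < Real.pi / 2 := by
    have h : 0 < Real.arctan (Real.sinh (ℓ / 2)) := by
      have hs' : (0:ℝ) < Real.sinh (ℓ / 2) := Real.sinh_pos_iff.mpr (by linarith)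
      have := Real.arctan_strictMono hs'
      simpa [Real.arctan_zero] using this
    simp only [hA]; linarith
  have hcX : c * collarX ℓ = A := by
    rw [collarX, hc]
    field_simp
    ring
  clear_value A c
  set K : Set ℝ := Set.Icc (-(collarX ℓ)) (collarX ℓ) with hK
  have hXpos : 0 < collarX ℓ := by
    nlinarith [hcX, hA0, hcpos]
  have hbound : ∀ x ∈ K, c * x ∈ Set.Icc (-A) A := by
    intro x hx
    obtain ⟨hx1, hx2⟩ := hx
    constructor
    · nlinarith
    · nlinarith
  have hcos : ∀ x ∈ K, 0 < Real.cos (c * x) := by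
    intro x hx
    obtain ⟨h1', h2'⟩ := hbound x hx
    apply Real.cos_pos_of_mem_Ioo
    constructor <;> [linarith; linarith]
  have htanA : Real.tan A = (Real.sinh (ℓ / 2))⁻¹ := by
    rw [hA, Real.tan_pi_div_two_sub, Real.tan_arctan]
  have hsinh : ℓ / 2 < Real.sinh (ℓ / 2) := Real.self_lt_sinh_iff.mpr (by linarith)
  have hSpos : 0 < Real.sinh (ℓ / 2) := by linarith
  have hCbound : c * Real.tan A ≤ 1 / Real.pi := by
    rw [htanA, hc]
    have heq : ℓ / (2 * Real.pi) * (Real.sinh (ℓ / 2))⁻¹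
        = ℓ / (2 * Real.pi * Real.sinh (ℓ / 2)) := by
      field_simp
    rw [heq, div_le_div_iff₀ (by positivity) hπ]
    nlinarith
  have htanA_pos : 0 < Real.tan A := by
    rw [htanA]; positivity
  have htan_mono : ∀ u ∈ Set.Icc (-A) A, |Real.tan u| ≤ Real.tan A := by
    intro u hu
    have hmem : ∀ v ∈ Set.Icc (-A) A,
        v ∈ Set.Ioo (-(Real.pi / 2)) (Real.pi / 2) := by
      intro v hv
      constructor <;> [linarith [hv.1]; linarith [hv.2]]
    have hmono := Real.strictMonoOn_tan.monotoneOn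
    rw [abs_le]
    constructor
    · have := hmono (hmem _ ⟨le_refl _, by linarith⟩) (hmem u hu) hu.1
      rw [Real.tan_neg] at this
      linarith
    · exact hmono (hmem u hu) (hmem _ ⟨by linarith, le_refl _⟩) hu.2
  set f : ℝ → ℝ := fun x => Real.log (Real.cos (c * x)) with hf
  set f' : ℝ → ℝ := fun x => -Real.sin (c * x) * c / Real.cos (c * x) with hf'
  have hderiv : ∀ x ∈ K, HasDerivWithinAt f (f' x) K x := by
    intro x hx
    have h1' : HasDerivAt (fun x : ℝ => c * x) c x := by
      simpa using (hasDerivAt_id x).const_mul c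
    have h2' : HasDerivAt (fun x => Real.cos (c * x)) (-Real.sin (c * x) * c) x :=
      (Real.hasDerivAt_cos (c * x)).comp x h1'
    exact (h2'.log (ne_of_gt (hcos x hx))).hasDerivWithinAt
  have hnorm : ∀ x ∈ K, ‖f' x‖ ≤ 1 / Real.pi := by
    intro x hx
    have h1' : f' x = -(c * Real.tan (c * x)) := by
      simp only [hf', Real.tan_eq_sin_div_cos]
      field_simp
    rw [h1', norm_neg, Real.norm_eq_abs, abs_mul, abs_of_pos hcpos]
    calc c * |Real.tan (c * x)| ≤ c * Real.tan A := by
          have := htan_mono (c * x) (hbound x hx)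
          nlinarith
      _ ≤ 1 / Real.pi := hCbound
  have key := (convex_Icc (-(collarX ℓ)) (collarX ℓ)).norm_image_sub_le_of_norm_hasDerivWithin_le
    hderiv hnorm hs hs₀
  have hlog : f s₀ - f s ≤ Λ / Real.pi := by
    have h1' : ‖f s₀ - f s‖ ≤ 1 / Real.pi * ‖s₀ - s‖ := key
    rw [Real.norm_eq_abs, Real.norm_eq_abs] at h1'
    have h2' : |s₀ - s| ≤ Λ := by rw [abs_sub_comm]; exact hd
    have h3' : f s₀ - f s ≤ |f s₀ - f s| := le_abs_self _
    have : 1 / Real.pi * |s₀ - s| ≤ Λ / Real.pi := by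
      rw [div_eq_mul_inv Λ, one_div, mul_comm Λ]
      exact mul_le_mul_of_nonneg_left h2' (by positivity)
    linarith
  have hcos_s := hcos s hs
  have hcos_s₀ := hcos s₀ hs₀
  have hcmp : Real.cos (c * s₀) ≤ Real.exp (Λ / Real.pi) * Real.cos (c * s) := by
    have : Real.cos (c * s₀) = Real.exp (f s₀) := by
      rw [hf]; simp only []; rw [Real.exp_log hcos_s₀]
    rw [this]
    have h2' : Real.exp (Λ / Real.pi) * Real.cos (c * s)
        = Real.exp (Λ / Real.pi + f s) := by
      rw [Real.exp_add, hf]; simp only []; rw [Real.exp_log hcos_s]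
    rw [h2']
    exact Real.exp_le_exp.mpr (by linarith)
  have harg : ∀ x : ℝ, ℓ * x / (2 * Real.pi) = c * x := by
    intro x; rw [hc]; ring
  rw [collarRho, collarRho, harg s, harg s₀, mul_div_assoc']
  rw [div_le_div_iff₀ (by positivity) (by positivity)]
  nlinarith [mul_le_mul_of_nonneg_left hcmp (le_of_lt (mul_pos (mul_pos two_pos hπ) h0)),
    Real.exp_pos (Λ / Real.pi)]
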